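/- Two bi-infinite paths in 𝓔_R with the same itinerary are equivalent under the action of SL₂(R): there exists A ∈ SL₂(R) mapping one path to the other vertexwise. -/

import Mathlib

/-- recurrence extraction: if two consecutive determinants are 1, then the
third vertex is obtained from the previous two via the itinerary value. -/
lemma rec_x {R : Type*} [CommRing R] (x0 x1 x2 y0 y1 y2 : R)
    (h1 : x0 * y1 - y0 * x1 = 1) (h2 : x1 * y2 - y1 * x2 = 1) :
    x2 = (x0 * y2 - y0 * x2) * x1 - x0 := by
  linear_combination (-x2) * h1 - x0 * h2

lemma rec_y {R : Type*} [CommRing R] (x0 x1 x2 y0 y1 y2 : R)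
    (h1 : x0 * y1 - y0 * x1 = 1) (h2 : x1 * y2 - y1 * x2 = 1) :
    y2 = (x0 * y2 - y0 * x2) * y1 - y0 := by
  linear_combination (-y2) * h1 - y0 * h2

/-- if two sequences satisfy the same three-term recurrence, their
"Wronskian" is constant. -/
lemma const_wronskian {R : Type*} [CommRing R] (e x y : ℤ → R)
    (hx : ∀ i : ℤ, x (i + 2) = e i * x (i + 1) - x i)
    (hy : ∀ i : ℤ, y (i + 2) = e i * y (i + 1) - y i) :
    ∀ i : ℤ, x i * y (i + 1) - x (i + 1) * y i = x 0 * y 1 - x 1 * y 0 := by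
  have step : ∀ i : ℤ,
      x (i + 1) * y (i + 2) - x (i + 2) * y (i + 1)
        = x i * y (i + 1) - x (i + 1) * y i := by
    intro i
    rw [hx i, hy i]; ring
  intro i
  induction i using Int.induction_on with
  | zero => norm_num
  | succ n ih =>
      have := step n
      rw [show ((n : ℤ) + 1 + 1) = (n : ℤ) + 2 from by ring]
      rw [this]; exact ih
  | pred n ih =>
      have h := step (-(n : ℤ) - 1)
      rw [show (-(n : ℤ) - 1 + 2) = -(n : ℤ) + 1 from by ring,
        show (-(n : ℤ) - 1 + 1) = -(n : ℤ) from by ring] at h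
      rw [show (-(n : ℤ) - 1 + 1) = -(n : ℤ) from by ring, ← h]
      exact ih

theorem same_itinerary_sl2_equivalent {R : Type*} [CommRing R] (a b c d : ℤ → R)
    (hγ : ∀ i : ℤ, a i * b (i + 1) - b i * a (i + 1) = 1)
    (hδ : ∀ i : ℤ, c i * d (i + 1) - d i * c (i + 1) = 1)
    (hitin : ∀ i : ℤ,
      a (i - 1) * b (i + 1) - b (i - 1) * a (i + 1) =
        c (i - 1) * d (i + 1) - d (i - 1) * c (i + 1)) :
    ∃ p q r s : R, p * s - q * r = 1 ∧
      ∀ i : ℤ, c i = p * a i + q * b i ∧ d i = r * a i + s * b i := by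
  set e : ℤ → R := fun i => a i * b (i + 2) - b i * a (i + 2) with he
  have hg2 : ∀ i : ℤ, a (i + 1) * b (i + 2) - b (i + 1) * a (i + 2) = 1 := by
    intro i
    have := hγ (i + 1)
    rwa [show ((i : ℤ) + 1 + 1) = i + 2 from by ring] at this
  have hd2 : ∀ i : ℤ, c (i + 1) * d (i + 2) - d (i + 1) * c (i + 2) = 1 := by
    intro i
    have := hδ (i + 1)
    rwa [show ((i : ℤ) + 1 + 1) = i + 2 from by ring] at this
  have hit : ∀ i : ℤ, c i * d (i + 2) - d i * c (i + 2) = e i := by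
    intro i
    have := hitin (i + 1)
    rw [show ((i : ℤ) + 1 - 1) = i from by ring,
      show ((i : ℤ) + 1 + 1) = i + 2 from by ring] at this
    exact this.symm
  have ha : ∀ i : ℤ, a (i + 2) = e i * a (i + 1) - a i := fun i =>
    rec_x (a i) (a (i + 1)) (a (i + 2)) (b i) (b (i + 1)) (b (i + 2))
      (hγ i) (hg2 i)
  have hb : ∀ i : ℤ, b (i + 2) = e i * b (i + 1) - b i := fun i =>
    rec_y (a i) (a (i + 1)) (a (i + 2)) (b i) (b (i + 1)) (b (i + 2))
      (hγ i) (hg2 i)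
  have hc : ∀ i : ℤ, c (i + 2) = e i * c (i + 1) - c i := by
    intro i
    have := rec_x (c i) (c (i + 1)) (c (i + 2)) (d i) (d (i + 1)) (d (i + 2))
      (hδ i) (hd2 i)
    rwa [hit i] at this
  have hd : ∀ i : ℤ, d (i + 2) = e i * d (i + 1) - d i := by
    intro i
    have := rec_y (c i) (c (i + 1)) (c (i + 2)) (d i) (d (i + 1)) (d (i + 2))
      (hδ i) (hd2 i)
    rwa [hit i] at this
  have Wcb := const_wronskian e c b hc hb
  have Wca := const_wronskian e c a hc ha
  have Wdb := const_wronskian e d b hd hb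
  have Wda := const_wronskian e d a hd ha
  refine ⟨c 0 * b 1 - c 1 * b 0, c 1 * a 0 - c 0 * a 1,
    d 0 * b 1 - d 1 * b 0, d 1 * a 0 - d 0 * a 1, ?_, ?_⟩
  · have h0 := hγ 0
    have h0' := hδ 0
    norm_num at h0 h0'
    linear_combination (c 0 * d 1 - d 0 * c 1) * h0 + h0'
  · intro i
    constructor
    · linear_combination -(c i) * hγ i + (a i) * Wcb i - (b i) * Wca i
    · linear_combination -(d i) * hγ i + (a i) * Wdb i - (b i) * Wda i
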